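/- Let φ : ℝⁿ → [0,∞] be a lower semicontinuous convex function with φ(0) = 0, and let φ° be its polar function. Then for every t > 0: ({x : φ(x) ≤ 1/t})° ⊆ {x : φ°(x) ≤ t} ⊆ 2·({x : φ(x) ≤ 1/t})°, where A° denotes the polar set of A and 2·A = {2a : a ∈ A}. -/

import Mathlib

open ENNReal Pointwise RealInnerProductSpace

noncomputable section

abbrev En (n : ℕ) := EuclideanSpace ℝ (Fin n)

/-- Convexity for `[0,∞]`-valued functions on `ℝⁿ`. -/
def ConvexENN {n : ℕ} (φ : En n → ℝ≥0∞) : Prop :=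
  ∀ x y : En n, ∀ l : ℝ, 0 < l → l < 1 →
    φ (l • x + (1 - l) • y) ≤ ENNReal.ofReal l * φ x + ENNReal.ofReal (1 - l) * φ y

/-- The polar set `A° = {y : ⟨x,y⟩ ≤ 1 for all x ∈ A}`. -/
def polarSet {n : ℕ} (A : Set (En n)) : Set (En n) :=
  {y | ∀ x ∈ A, ⟪x, y⟫ ≤ (1 : ℝ)}

/-- The polar function `φ°(x) = sup_y (⟨x,y⟩ − 1)₊ / φ(y)`, with the `ℝ≥0∞`-conventions
`0 / 0 = 0` and `a / 0 = ∞` for `a > 0`. -/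
def polarFn {n : ℕ} (φ : En n → ℝ≥0∞) : En n → ℝ≥0∞ :=
  fun x => ⨆ y : En n, ENNReal.ofReal (⟪x, y⟫ - 1) / φ y

theorem stmt6 (n : ℕ) (φ : En n → ℝ≥0∞)
    (hlsc : LowerSemicontinuous φ) (hconv : ConvexENN φ) (h0 : φ 0 = 0) :
    ∀ t : ℝ, 0 < t →
      polarSet {x : En n | φ x ≤ ENNReal.ofReal (1 / t)} ⊆
        {x : En n | polarFn φ x ≤ ENNReal.ofReal t} ∧
      {x : En n | polarFn φ x ≤ ENNReal.ofReal t} ⊆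
        (2 : ℝ) • polarSet {x : En n | φ x ≤ ENNReal.ofReal (1 / t)} := by
  intro t ht
  constructor
  · -- K° ⊆ {polarFn φ ≤ t}
    intro x hx
    simp only [Set.mem_setOf_eq, polarFn]
    refine iSup_le fun y => ?_
    by_cases hy : φ y ≤ ENNReal.ofReal (1 / t)
    · have h1 : ⟪x, y⟫ ≤ 1 := by rw [real_inner_comm]; exact hx y hy
      have hz : ENNReal.ofReal (⟪x, y⟫ - 1) = 0 := by
        rw [ENNReal.ofReal_eq_zero]; linarith
      rw [hz, ENNReal.zero_div]; exact zero_le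
    · push_neg at hy
      by_cases htop : φ y = ⊤
      · simp [htop]
      · set c := (φ y).toReal with hc
        have hcgt : 1 / t < c :=
          (ENNReal.ofReal_lt_iff_lt_toReal (by positivity) htop).mp hy
        have hcpos : 0 < c := lt_trans (by positivity) hcgt
        set l : ℝ := 1 / (t * c) with hl
        have hlpos : 0 < l := by positivity
        have hl1 : l < 1 := by
          rw [hl, div_lt_one (by positivity)]
          calc 1 = t * (1 / t) := by field_simp
          _ < t * c := by exact mul_lt_mul_of_pos_left hcgt ht
        have hmem : φ (l • y) ≤ ENNReal.ofReal (1 / t) := by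
          have := hconv y 0 l hlpos hl1
          simp only [smul_zero, add_zero, h0, mul_zero] at this
          refine this.trans ?_
          rw [← (ENNReal.ofReal_toReal htop), ← hc, ← ENNReal.ofReal_mul hlpos.le]
          apply ENNReal.ofReal_le_ofReal
          rw [hl, div_mul_eq_mul_div, one_mul, mul_comm t c, ← div_div,
            div_self hcpos.ne', one_div]
        have hinner : ⟪l • y, x⟫ ≤ 1 := hx (l • y) hmem
        rw [real_inner_smul_left] at hinner
        have hxy : ⟪x, y⟫ ≤ t * c := by
          have : ⟪y, x⟫ ≤ 1 / l := by
            rw [le_div_iff₀ hlpos, mul_comm]; exact hinner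
          rw [real_inner_comm]
          refine this.trans (le_of_eq ?_)
          rw [hl, one_div_one_div]
        apply ENNReal.div_le_of_le_mul
        rw [← (ENNReal.ofReal_toReal htop), ← hc, ← ENNReal.ofReal_mul ht.le]
        apply ENNReal.ofReal_le_ofReal
        linarith
  · -- {polarFn φ ≤ t} ⊆ 2 • K°
    intro x hx
    rw [Set.mem_smul_set]
    refine ⟨(2:ℝ)⁻¹ • x, ?_, by rw [smul_smul]; norm_num⟩
    intro y hy
    simp only [Set.mem_setOf_eq] at hx hy
    have hle : ENNReal.ofReal (⟪x, y⟫ - 1) / φ y ≤ ENNReal.ofReal t :=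
      le_trans (le_iSup (fun z => ENNReal.ofReal (⟪x, z⟫ - 1) / φ z) y) hx
    have hxy2 : ⟪y, x⟫ ≤ 2 := by
      rw [real_inner_comm]
      by_cases h0' : φ y = 0
      · by_contra hgt
        push_neg at hgt
        rw [h0', ENNReal.div_zero] at hle
        · exact (ENNReal.ofReal_ne_top : ENNReal.ofReal t ≠ ⊤) (top_le_iff.mp hle)
        · rw [ne_eq, ENNReal.ofReal_eq_zero]; push_neg; linarith
      · have hyt : φ y ≠ ⊤ := ne_top_of_le_ne_top ENNReal.ofReal_ne_top hy
        have := (ENNReal.div_le_iff h0' hyt).mp hle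
        have h1 : ENNReal.ofReal (⟪x, y⟫ - 1) ≤ 1 := by
          refine this.trans ?_
          calc ENNReal.ofReal t * φ y ≤ ENNReal.ofReal t * ENNReal.ofReal (1 / t) :=
                mul_le_mul_right hy _
          _ = ENNReal.ofReal (t * (1 / t)) := (ENNReal.ofReal_mul ht.le).symm
          _ = 1 := by rw [mul_one_div_cancel ht.ne', ENNReal.ofReal_one]
        rw [ENNReal.ofReal_le_one] at h1
        linarith
    rw [real_inner_smul_right]
    linarith
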